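/- For every nonnegative integers p and r and every real x with |x| < 1, ∑_{n=0}^∞ C(n+r, r) n^p x^n = (1/(1-x)^{r+1}) · ω_{p,r+1}(x/(1-x)), where ω_{p,r+1}(x) = (1/r!) ∑_{k=0}^p S(p,k)(k+r)! x^k (with the convention 0^0 = 1 when p = 0). -/

import Mathlib

open Finset Real

/-- Stirling numbers of the second kind. -/
def stirling2 : ℕ → ℕ → ℕ
  | 0, 0 => 1
  | 0, _ + 1 => 0
  | _ + 1, 0 => 0
  | p + 1, k + 1 => (k + 1) * stirling2 p (k + 1) + stirling2 p k

/-- The generalized geometric polynomial $\omega_{p,r+1}$. -/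
noncomputable def genGeomPoly (p r : ℕ) (x : ℝ) : ℝ :=
  (1 / r.factorial) * ∑ k ∈ Finset.range (p + 1), (stirling2 p k : ℝ) * (k + r).factorial * x ^ k

lemma stirling2_eq_zero {p k : ℕ} (h : p < k) : stirling2 p k = 0 := by
  induction p generalizing k with
  | zero => cases k with
    | zero => omega
    | succ k => rfl
  | succ p ih =>
    cases k with
    | zero => omega
    | succ k =>
      have h1 : p < k + 1 := by omega
      have h2 : p < k := by omega
      simp [stirling2, ih h1, ih h2]

lemma mul_descFactorial (n k : ℕ) :
    n * n.descFactorial k = n.descFactorial (k + 1) + k * n.descFactorial k := by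
  rcases le_or_gt k n with h | h
  · rw [Nat.descFactorial_succ, Nat.sub_mul]
    have : k * n.descFactorial k ≤ n * n.descFactorial k := Nat.mul_le_mul_right _ h
    omega
  · rw [Nat.descFactorial_eq_zero_iff_lt.2 h,
      Nat.descFactorial_eq_zero_iff_lt.2 (by omega)]
    simp

lemma pow_eq_sum_stirling (p n : ℕ) :
    n ^ p = ∑ k ∈ Finset.range (p + 1), stirling2 p k * n.descFactorial k := by
  induction p with
  | zero => simp [stirling2]
  | succ p ih =>
    have : n ^ (p + 1) = ∑ k ∈ Finset.range (p + 1),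
        stirling2 p k * (n.descFactorial (k + 1) + k * n.descFactorial k) := by
      rw [pow_succ, mul_comm, ih, Finset.mul_sum]
      refine Finset.sum_congr rfl fun k _ => ?_
      rw [← mul_descFactorial]; ring
    rw [this]
    simp only [Nat.mul_add]
    rw [Finset.sum_add_distrib]
    have hB : ∑ k ∈ Finset.range (p + 1), stirling2 p k * (k * n.descFactorial k)
        = ∑ k ∈ Finset.range (p + 1), (k + 1) * stirling2 p (k + 1) * n.descFactorial (k + 1) := by
      rw [Finset.sum_range_succ' (fun k => stirling2 p k * (k * n.descFactorial k)) p,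
        Finset.sum_range_succ (fun k => (k + 1) * stirling2 p (k + 1) * n.descFactorial (k + 1)) p,
        stirling2_eq_zero (by omega : p < p + 1)]
      simp only [Nat.mul_zero, Nat.zero_mul, Nat.add_zero]
      refine Finset.sum_congr rfl fun k _ => ?_
      ring
    rw [hB, Finset.sum_range_succ' (fun k => stirling2 (p + 1) k * n.descFactorial k) (p + 1)]
    simp only [stirling2, Nat.descFactorial_zero, Nat.mul_zero, Nat.add_zero]
    rw [← Finset.sum_add_distrib]
    refine Finset.sum_congr rfl fun k _ => ?_
    ring

lemma choose_descFactorial (n r k : ℕ) :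
    ((n + r).choose r : ℝ) * (n.descFactorial k : ℝ)
      = ((k + r).factorial / r.factorial) * ((n + r).choose (k + r) : ℝ) := by
  rcases le_or_gt k n with h | h
  · rw [Nat.cast_choose ℝ (Nat.le_add_left r n), Nat.cast_choose ℝ (by omega : k + r ≤ n + r)]
    have hd : (n.descFactorial k : ℝ) = n.factorial / (n - k).factorial := by
      rw [← Nat.factorial_mul_descFactorial h]
      push_cast
      field_simp
    rw [hd]
    have h1 : n + r - r = n := by omega
    have h2 : n + r - (k + r) = n - k := by omega
    rw [h1, h2]
    have f1 : (r.factorial : ℝ) ≠ 0 := Nat.cast_ne_zero.2 r.factorial_ne_zero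
    have f2 : (n.factorial : ℝ) ≠ 0 := Nat.cast_ne_zero.2 n.factorial_ne_zero
    have f3 : ((n-k).factorial : ℝ) ≠ 0 := Nat.cast_ne_zero.2 (n-k).factorial_ne_zero
    have f4 : ((k+r).factorial : ℝ) ≠ 0 := Nat.cast_ne_zero.2 (k+r).factorial_ne_zero
    field_simp
  · have hc : (n + r).choose (k + r) = 0 := Nat.choose_eq_zero_of_lt (by omega)
    rw [Nat.descFactorial_eq_zero_iff_lt.2 h, hc]
    simp

theorem stmt_18 (p r : ℕ) (x : ℝ) (hx : |x| < 1) :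
    ∑' n : ℕ, ((n + r).choose r : ℝ) * (n : ℝ) ^ p * x ^ n
      = (1 / (1 - x) ^ (r + 1)) * genGeomPoly p r (x / (1 - x)) := by
  have hx' : ‖x‖ < 1 := by rwa [Real.norm_eq_abs]
  have h1x : (1 : ℝ) - x ≠ 0 := by
    intro h; rw [sub_eq_zero] at h; rw [← h] at hx; simp at hx
  -- per-k has sum
  have hk : ∀ k : ℕ, HasSum (fun n : ℕ => ((n + r).choose (k + r) : ℝ) * x ^ n)
      (x ^ k / (1 - x) ^ (k + r + 1)) := by
    intro k
    have base := hasSum_choose_mul_geometric_of_norm_lt_one (𝕜 := ℝ) (k + r) hx'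
    have shifted : HasSum (fun n : ℕ => ((n + k + r).choose (k + r) : ℝ) * x ^ (n + k))
        (x ^ k * (1 / (1 - x) ^ (k + r + 1))) := by
      have := base.mul_left (x ^ k)
      refine this.congr_fun fun n => ?_
      rw [pow_add]
      have : n + k + r = n + (k + r) := by omega
      rw [this]
      ring
    have := (hasSum_nat_add_iff (f := fun n : ℕ => ((n + r).choose (k + r) : ℝ) * x ^ n) k).1 shifted
    have hz : ∑ i ∈ Finset.range k, ((i + r).choose (k + r) : ℝ) * x ^ i = 0 := by
      refine Finset.sum_eq_zero fun i hi => ?_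
      rw [Nat.choose_eq_zero_of_lt (by simp at hi; omega)]
      simp
    rw [hz, add_zero] at this
    rwa [mul_one_div] at this
  -- total has sum
  have key : HasSum (fun n : ℕ => ((n + r).choose r : ℝ) * (n : ℝ) ^ p * x ^ n)
      (∑ k ∈ Finset.range (p + 1),
        (stirling2 p k : ℝ) * ((k + r).factorial / r.factorial) * (x ^ k / (1 - x) ^ (k + r + 1))) := by
    have hs : HasSum (fun n : ℕ => ∑ k ∈ Finset.range (p + 1),
        (stirling2 p k : ℝ) * ((k + r).factorial / r.factorial)
          * (((n + r).choose (k + r) : ℝ) * x ^ n))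
        (∑ k ∈ Finset.range (p + 1),
          (stirling2 p k : ℝ) * ((k + r).factorial / r.factorial) * (x ^ k / (1 - x) ^ (k + r + 1))) :=
      hasSum_sum fun k _ => ((hk k).mul_left _)
    refine hs.congr_fun fun n => ?_
    have hp : ((n : ℝ)) ^ p = ∑ k ∈ Finset.range (p + 1),
        (stirling2 p k : ℝ) * (n.descFactorial k : ℝ) := by
      have := pow_eq_sum_stirling p n
      have := congrArg (fun m : ℕ => (m : ℝ)) this
      push_cast at this
      exact this
    rw [hp, Finset.mul_sum, Finset.sum_mul]
    refine Finset.sum_congr rfl fun k _ => ?_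
    linear_combination ((stirling2 p k : ℝ) * x ^ n) * choose_descFactorial n r k
  rw [key.tsum_eq, genGeomPoly, Finset.mul_sum, Finset.mul_sum]
  refine Finset.sum_congr rfl fun k _ => ?_
  rw [div_pow, show k + r + 1 = k + (r + 1) by omega, pow_add]
  have h2 : (1 - x) ^ k ≠ 0 := pow_ne_zero _ h1x
  have h3 : (1 - x) ^ (r + 1) ≠ 0 := pow_ne_zero _ h1x
  have h4 : (1 - x) ^ (k + r + 1) ≠ 0 := pow_ne_zero _ h1x
  have f1 : (r.factorial : ℝ) ≠ 0 := Nat.cast_ne_zero.2 r.factorial_ne_zero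
  field_simp
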